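/- If γ ≤ π(w₀) and w is a solution with parameters (w₀,γ), then w is strictly decreasing on (0,∞) and w(x) → −∞ as x → ∞. -/

import Mathlib

open Set MeasureTheory Filter Topology

/-- `piU U c w = min_{μ ∈ U} (μ·w + c(μ))`, realized as an infimum. -/
noncomputable def piU (U : Set ℝ) (c : ℝ → ℝ) (w : ℝ) : ℝ :=
  sInf ((fun μ => μ * w + c μ) '' U)

/-- `w` is a continuously differentiable solution on `[0,∞)` of
`(σ²/2)·w′(x) + π(w(x)) + h(x) = γ` with `w(0) = w₀`, with derivative `w'`. -/
def IsSolution (σ : ℝ) (U : Set ℝ) (c h : ℝ → ℝ) (w₀ γ : ℝ) (w w' : ℝ → ℝ) : Prop :=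
  w 0 = w₀ ∧ ContinuousOn w' (Set.Ici 0) ∧
  (∀ x ∈ Set.Ici (0:ℝ), HasDerivWithinAt w (w' x) (Set.Ici 0) x) ∧
  (∀ x ∈ Set.Ici (0:ℝ), σ ^ 2 / 2 * w' x + piU U c (w x) + h x = γ)

lemma slope_right_nonpos {w : ℝ → ℝ} {d s t : ℝ} (hst : s < t)
    (hd : HasDerivWithinAt w d (Set.Ici s) s)
    (hle : ∀ x ∈ Set.Ioo s t, w x ≤ w s) : d ≤ 0 := by
  rw [hasDerivWithinAt_iff_tendsto_slope, Set.Ici_sdiff_left] at hd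
  refine le_of_tendsto hd ?_
  filter_upwards [Ioo_mem_nhdsGT_of_mem (⟨le_refl s, hst⟩ : s ∈ Set.Ico s t)] with x hx
  rw [slope_def_field]
  exact div_nonpos_of_nonpos_of_nonneg (sub_nonpos.2 (hle x hx)) (sub_nonneg.2 hx.1.le)

lemma slope_right_nonneg {w : ℝ → ℝ} {d s t : ℝ} (hst : s < t)
    (hd : HasDerivWithinAt w d (Set.Ici s) s)
    (hle : ∀ x ∈ Set.Ioo s t, w s ≤ w x) : 0 ≤ d := by
  rw [hasDerivWithinAt_iff_tendsto_slope, Set.Ici_sdiff_left] at hd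
  refine ge_of_tendsto hd ?_
  filter_upwards [Ioo_mem_nhdsGT_of_mem (⟨le_refl s, hst⟩ : s ∈ Set.Ico s t)] with x hx
  rw [slope_def_field]
  exact div_nonneg (sub_nonneg.2 (hle x hx)) (sub_nonneg.2 hx.1.le)

lemma slope_left_lt {w : ℝ → ℝ} {d t : ℝ} (ht : 0 < t)
    (hd : HasDerivWithinAt w d (Set.Ici 0) t) (hdpos : 0 < d) :
    ∃ l, 0 ≤ l ∧ l < t ∧ ∀ x ∈ Set.Ioo l t, w x < w t := by
  have hd2 : HasDerivWithinAt w d (Set.Ioo 0 t) t :=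
    hd.mono (Set.Ioo_subset_Icc_self.trans (Set.Icc_subset_Ici_self))
  rw [hasDerivWithinAt_iff_tendsto_slope] at hd2
  have hsub : Set.Ioo (0:ℝ) t \ {t} = Set.Ioo 0 t := by
    rw [Set.diff_singleton_eq_self]; simp
  rw [hsub, nhdsWithin_Ioo_eq_nhdsLT ht] at hd2
  have hev : ∀ᶠ x in 𝓝[<] t, 0 < slope w t x := hd2.eventually (eventually_gt_nhds hdpos)
  rw [eventually_iff, mem_nhdsLT_iff_exists_Ioo_subset] at hev
  obtain ⟨l, hl, hsub2⟩ := hev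
  refine ⟨max l 0, le_max_right _ _, max_lt hl ht, fun x hx => ?_⟩
  have hx' : x ∈ Set.Ioo l t := ⟨lt_of_le_of_lt (le_max_left _ _) hx.1, hx.2⟩
  have := hsub2 hx'
  rw [Set.mem_setOf_eq, slope_def_field] at this
  have hden : x - t < 0 := sub_neg.2 hx.2
  rcases div_pos_iff.1 this with ⟨_, h2⟩ | ⟨h1, _⟩
  · linarith
  · linarith

section piUfacts
variable {U : Set ℝ} {c : ℝ → ℝ} (hUne : U.Nonempty) (hUcpt : IsCompact U) (hc : Continuous c)
include hUne hUcpt hc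
set_option linter.unusedSectionVars false

omit hUne hc in
include hUcpt in
lemma piU_img_cpt (hc : Continuous c) (v : ℝ) : IsCompact ((fun μ => μ * v + c μ) '' U) :=
  hUcpt.image (by continuity)

lemma piU_le (v : ℝ) {μ : ℝ} (hμ : μ ∈ U) : piU U c v ≤ μ * v + c μ :=
  csInf_le (piU_img_cpt hUcpt hc v).bddBelow (Set.mem_image_of_mem _ hμ)

lemma piU_exists_min (v : ℝ) : ∃ μ ∈ U, piU U c v = μ * v + c μ := by
  have := (piU_img_cpt hUcpt hc v).sInf_mem (hUne.image _)
  obtain ⟨μ, hμ, heq⟩ := this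
  exact ⟨μ, hμ, heq.symm⟩

lemma piU_le_add {K : ℝ} (hK : ∀ μ ∈ U, |μ| ≤ K) (v₁ v₂ : ℝ) :
    piU U c v₁ ≤ piU U c v₂ + K * |v₁ - v₂| := by
  obtain ⟨μ, hμ, heq⟩ := piU_exists_min hUne hUcpt hc v₂
  have h1 : piU U c v₁ ≤ μ * v₁ + c μ := piU_le hUne hUcpt hc v₁ hμ
  have h2 : μ * v₁ + c μ = (μ * v₂ + c μ) + μ * (v₁ - v₂) := by ring
  have h3 : μ * (v₁ - v₂) ≤ K * |v₁ - v₂| := by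
    calc μ * (v₁ - v₂) ≤ |μ * (v₁ - v₂)| := le_abs_self _
    _ = |μ| * |v₁ - v₂| := abs_mul _ _
    _ ≤ K * |v₁ - v₂| := mul_le_mul_of_nonneg_right (hK μ hμ) (abs_nonneg _)
  rw [heq]; linarith

lemma piU_lb {K m : ℝ} (hK : ∀ μ ∈ U, |μ| ≤ K) (hm : ∀ μ ∈ U, m ≤ c μ) (v : ℝ) :
    m - K * |v| ≤ piU U c v := by
  refine le_csInf (hUne.image _) ?_
  rintro b ⟨μ, hμ, rfl⟩
  have h1 : -(K * |v|) ≤ μ * v := by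
    have : |μ * v| ≤ K * |v| := by
      rw [abs_mul]; exact mul_le_mul_of_nonneg_right (hK μ hμ) (abs_nonneg _)
    linarith [neg_abs_le (μ * v)]
  have := hm μ hμ
  simp only []
  linarith

end piUfacts

set_option maxHeartbeats 2000000 in
theorem stmt_10 (σ : ℝ) (hσ : 0 < σ) (U : Set ℝ) (hUne : U.Nonempty) (hUcpt : IsCompact U)
    (c : ℝ → ℝ) (hc : Continuous c) (h : ℝ → ℝ)
    (hhcont : ContinuousOn h (Set.Ici 0)) (hhmono : StrictMonoOn h (Set.Ici 0))
    (hh0 : h 0 = 0) (hhtop : Filter.Tendsto h Filter.atTop Filter.atTop)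
    (w₀ γ : ℝ) (w w' : ℝ → ℝ) (hw : IsSolution σ U c h w₀ γ w w')
    (hγ : γ ≤ piU U c w₀) :
    StrictAntiOn w (Set.Ioi 0) ∧ Filter.Tendsto w Filter.atTop Filter.atBot := by
  obtain ⟨hw0, hw'cont, hderiv, heqn⟩ := hw
  have hσ2 : (0:ℝ) < σ^2/2 := by positivity
  have key : ∀ x ∈ Set.Ici (0:ℝ), σ^2/2 * w' x = γ - piU U c (w x) - h x := by
    intro x hx; have := heqn x hx; linarith
  have hwcont : ContinuousOn w (Set.Ici 0) := fun x hx => (hderiv x hx).continuousWithinAt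
  obtain ⟨K, hK0, hK⟩ : ∃ K, 0 ≤ K ∧ ∀ μ ∈ U, |μ| ≤ K := by
    obtain ⟨r, hr⟩ := hUcpt.isBounded.subset_closedBall 0
    refine ⟨max r 0, le_max_right _ _, fun μ hμ => ?_⟩
    have := hr hμ
    rw [Metric.mem_closedBall, Real.dist_eq, sub_zero] at this
    exact this.trans (le_max_left _ _)
  have hh_pos : ∀ x : ℝ, 0 < x → 0 < h x := by
    intro x hx
    have := hhmono (Set.self_mem_Ici) (Set.mem_Ici.2 hx.le) hx
    rwa [hh0] at this
  have hh_nonneg : ∀ x : ℝ, 0 ≤ x → 0 ≤ h x := by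
    intro x hx
    rcases eq_or_lt_of_le hx with h'|h'
    · rw [← h', hh0]
    · exact (hh_pos x h').le
  -- Step 1 : w x < w₀ for x > 0
  have hlt : ∀ x : ℝ, 0 < x → w x < w₀ := by
    by_contra hcon
    push_neg at hcon
    obtain ⟨y, hy, hwy⟩ := hcon
    by_cases hcase : ∃ z, 0 < z ∧ w₀ < w z
    · obtain ⟨z, hz, hwz⟩ := hcase
      set S := Set.Icc 0 z ∩ w ⁻¹' (Set.Iic w₀) with hS
      have hSclosed : IsClosed S :=
        (hwcont.mono Set.Icc_subset_Ici_self).preimage_isClosed_of_isClosed isClosed_Icc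
          isClosed_Iic
      have hS0 : (0:ℝ) ∈ S := ⟨⟨le_refl 0, hz.le⟩, by simp [hw0]⟩
      have hSbdd : BddAbove S := ⟨z, fun x hx => hx.1.2⟩
      set s := sSup S with hs
      have hsS : s ∈ S := hSclosed.csSup_mem ⟨0, hS0⟩ hSbdd
      have hs0 : 0 ≤ s := hsS.1.1
      have hsz : s < z := lt_of_le_of_ne hsS.1.2 (by
        intro hcontra
        have : z ∈ S := hcontra ▸ hsS
        exact absurd this.2 (by simp [Set.mem_preimage]; linarith))
      have hgt : ∀ x ∈ Set.Ioo s z, w₀ < w x := by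
        intro x hx
        by_contra hc2
        push_neg at hc2
        have hxS : x ∈ S := ⟨⟨hs0.trans hx.1.le, hx.2.le⟩, hc2⟩
        exact absurd (le_csSup hSbdd hxS) (not_le.2 hx.1)
      have hws : w s = w₀ := by
        refine le_antisymm hsS.2 ?_
        have htend : Filter.Tendsto w (𝓝[>] s) (𝓝 (w s)) :=
          ((hwcont s hs0).mono (Set.Ioi_subset_Ici hs0)).tendsto
        refine ge_of_tendsto htend ?_
        filter_upwards [Ioo_mem_nhdsGT_of_mem (⟨le_refl s, hsz⟩ : s ∈ Set.Ico s z)] with x hx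
        exact (hgt x hx).le
      have hd : HasDerivWithinAt w (w' s) (Set.Ici s) s :=
        (hderiv s hs0).mono (Set.Ici_subset_Ici.2 hs0)
      have hw's : 0 ≤ w' s := slope_right_nonneg hsz hd (fun x hx => hws ▸ (hgt x hx).le)
      have hkey := key s hs0
      rw [hws] at hkey
      have hhs : h s = 0 ∧ γ = piU U c w₀ := by
        constructor <;> nlinarith [hh_nonneg s hs0, mul_nonneg hσ2.le hw's]
      have hs_eq : s = 0 := by
        by_contra hs_ne
        exact absurd hhs.1 (ne_of_gt (hh_pos s (lt_of_le_of_ne hs0 (Ne.symm hs_ne))))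
      -- Gronwall part: w > w₀ on (0, z], γ = π(w₀)
      have hgt' : ∀ x ∈ Set.Ioo (0:ℝ) z, w₀ < w x := by
        intro x hx; exact hgt x (by rw [hs_eq] at *; exact hx)
      set C := K / (σ^2/2) with hC
      have hCnn : 0 ≤ C := div_nonneg hK0 hσ2.le
      set g := fun x => (w x - w₀) * Real.exp (-C * x) with hg
      have hganti : AntitoneOn g (Set.Icc 0 z) := by
        have hgder : ∀ x ∈ Set.Ioo (0:ℝ) z,
            HasDerivAt g ((w' x - C * (w x - w₀)) * Real.exp (-C * x)) x := by
          intro x hx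
          have hwd : HasDerivAt w (w' x) x :=
            (hderiv x hx.1.le).hasDerivAt (Ici_mem_nhds hx.1)
          have hed : HasDerivAt (fun x : ℝ => Real.exp (-C * x)) (Real.exp (-C * x) * (-C)) x := by
            simpa using ((hasDerivAt_id x).const_mul (-C)).exp
          have := (hwd.sub_const w₀).mul hed
          rw [show (w' x - C * (w x - w₀)) * Real.exp (-C * x) = w' x * Real.exp (-C * x) + (w x - w₀) * (Real.exp (-C * x) * -C) by ring]
          exact this
        refine antitoneOn_of_deriv_nonpos (convex_Icc 0 z)
          (((hwcont.mono Set.Icc_subset_Ici_self).sub continuousOn_const).mul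
            (Real.continuous_exp.comp (continuous_const.mul continuous_id)).continuousOn)
          ?_ ?_
        · rw [interior_Icc]
          exact fun x hx => ((hgder x hx).differentiableAt).differentiableWithinAt
        · rw [interior_Icc]
          intro x hx
          rw [(hgder x hx).deriv]
          have hwx : w₀ < w x := hgt' x hx
          have hkx := key x hx.1.le
          have hpi : piU U c w₀ ≤ piU U c (w x) + K * (w x - w₀) := by
            have := piU_le_add hUne hUcpt hc hK w₀ (w x)
            rwa [abs_of_nonpos (by linarith), neg_sub] at this
          have hbr : w' x - C * (w x - w₀) ≤ 0 := by
            have h1 : σ^2/2 * w' x ≤ K * (w x - w₀) := by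
              have := hh_nonneg x hx.1.le
              have hγ' := hhs.2
              nlinarith
            rw [hC]
            rw [div_mul_eq_mul_div, sub_nonpos, le_div_iff₀ hσ2]
            nlinarith
          exact mul_nonpos_of_nonpos_of_nonneg hbr (Real.exp_pos _).le
      have hg0 : g 0 = 0 := by simp [hg, hw0]
      have hgz : 0 < g z := by
        have hz1 : (0:ℝ) < w z - w₀ := by linarith
        have : 0 < (w z - w₀) * Real.exp (-C * z) := by positivity
        simpa [hg] using this
      have := hganti (Set.left_mem_Icc.2 hz.le) (Set.right_mem_Icc.2 hz.le) hz.le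
      rw [hg0] at this
      linarith
    · push_neg at hcase
      have hwyeq : w y = w₀ := le_antisymm (hcase y hy) hwy
      have hmax : IsLocalMax w y := by
        filter_upwards [Ioi_mem_nhds hy] with x hx
        rw [hwyeq]
        exact hcase x hx
      have hDA : HasDerivAt w (w' y) y := (hderiv y hy.le).hasDerivAt (Ici_mem_nhds hy)
      have hzero : w' y = 0 := hmax.hasDerivAt_eq_zero hDA
      have hkey := key y hy.le
      rw [hzero, hwyeq] at hkey
      have := hh_pos y hy
      nlinarith
  -- Step 2 : w' ≤ 0 on [0,∞)
  have hnonpos : ∀ x : ℝ, 0 ≤ x → w' x ≤ 0 := by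
    intro t ht
    rcases eq_or_lt_of_le ht with ht0 | htpos
    · have hkey := key 0 Set.self_mem_Ici
      rw [hw0, hh0] at hkey
      rw [← ht0]
      nlinarith
    · by_contra hcon
      push_neg at hcon
      obtain ⟨l, hl0, hlt', hloo⟩ := slope_left_lt htpos (hderiv t ht) hcon
      set B := {x | x ∈ Set.Icc 0 t ∧ w t < w x} with hB
      have hwtlt : w t < w₀ := hlt t htpos
      have hB0 : (0:ℝ) ∈ B := ⟨⟨le_refl 0, htpos.le⟩, by rw [hw0]; exact hwtlt⟩
      have hBbdd : BddAbove B := ⟨t, fun x hx => hx.1.2⟩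
      set s := sSup B with hs
      have hs0 : 0 ≤ s := le_csSup hBbdd hB0
      have hBsub : B ⊆ Set.Icc 0 l := by
        rintro x ⟨⟨hx0, hxt⟩, hwx⟩
        refine ⟨hx0, ?_⟩
        by_contra hxl
        push_neg at hxl
        rcases eq_or_lt_of_le hxt with hxeq | hxlt
        · rw [hxeq] at hwx; exact lt_irrefl _ hwx
        · exact absurd hwx (not_lt.2 (hloo x ⟨hxl, hxlt⟩).le)
      have hsl : s ≤ l := csSup_le ⟨0, hB0⟩ (fun x hx => (hBsub hx).2)
      have hst : s < t := lt_of_le_of_lt hsl hlt'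
      have hsmem : s ∈ Set.Icc 0 t ∧ w t ≤ w s := by
        have hclosed : IsClosed (Set.Icc (0:ℝ) t ∩ w ⁻¹' (Set.Ici (w t))) :=
          (hwcont.mono (Set.Icc_subset_Ici_self : Set.Icc (0:ℝ) t ⊆ Set.Ici 0)).preimage_isClosed_of_isClosed
            isClosed_Icc isClosed_Ici
        have hsub : B ⊆ Set.Icc (0:ℝ) t ∩ w ⁻¹' (Set.Ici (w t)) :=
          fun x hx => ⟨hx.1, Set.mem_preimage.2 (Set.mem_Ici.2 hx.2.le)⟩
        have hthis : s ∈ closure B := csSup_mem_closure ⟨0, hB0⟩ hBbdd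
        have := (hclosed.closure_subset_iff.2 hsub) hthis
        exact ⟨this.1, this.2⟩
      have hgt2 : ∀ x ∈ Set.Ioo s t, w x ≤ w t := by
        intro x hx
        by_contra hc2
        push_neg at hc2
        have hxB : x ∈ B := ⟨⟨hs0.trans hx.1.le, hx.2.le⟩, hc2⟩
        exact absurd (le_csSup hBbdd hxB) (not_le.2 hx.1)
      have hws : w s = w t := by
        refine le_antisymm ?_ hsmem.2
        have htend : Filter.Tendsto w (𝓝[>] s) (𝓝 (w s)) :=
          ((hwcont s hs0).mono (Set.Ioi_subset_Ici hs0)).tendsto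
        refine le_of_tendsto htend ?_
        filter_upwards [Ioo_mem_nhdsGT_of_mem (⟨le_refl s, hst⟩ : s ∈ Set.Ico s t)] with x hx
        exact hgt2 x hx
      have hd : HasDerivWithinAt w (w' s) (Set.Ici s) s :=
        (hderiv s hs0).mono (Set.Ici_subset_Ici.2 hs0)
      have hw's : w' s ≤ 0 :=
        slope_right_nonpos hst hd (fun x hx => hws ▸ hgt2 x hx)
      have hkt := key t ht
      have hks := key s hs0
      rw [hws] at hks
      have hhlt : h s < h t := hhmono (Set.mem_Ici.2 hs0) (Set.mem_Ici.2 ht) hst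
      nlinarith
  -- Step 3 : w antitone on [0,∞)
  have hanti : AntitoneOn w (Set.Ici 0) := by
    refine antitoneOn_of_deriv_nonpos (convex_Ici 0) hwcont ?_ ?_
    · rw [interior_Ici]
      intro x hx
      exact ((hderiv x (Set.mem_Ici.2 (le_of_lt (Set.mem_Ioi.1 hx)))).hasDerivAt (Ici_mem_nhds hx)).differentiableAt.differentiableWithinAt
    · rw [interior_Ici]
      intro x hx
      rw [((hderiv x (Set.mem_Ici.2 (le_of_lt (Set.mem_Ioi.1 hx)))).hasDerivAt (Ici_mem_nhds hx)).deriv]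
      exact hnonpos x (le_of_lt hx)
  -- Step 4 : strict anti on (0,∞)
  have hstrict : StrictAntiOn w (Set.Ioi 0) := by
    intro a ha b hb hab
    rcases lt_or_eq_of_le (hanti (Set.mem_Ici.2 (le_of_lt ha)) (Set.mem_Ici.2 (le_of_lt hb))
      hab.le) with hlt2 | heq2
    · exact hlt2
    · exfalso
      have ha' : (0:ℝ) < a := ha
      have hb' : (0:ℝ) < b := hb
      have hconst : ∀ x ∈ Set.Icc a b, w x = w a := by
        intro x hx
        have hxI : x ∈ Set.Ici (0:ℝ) := Set.mem_Ici.2 (ha'.le.trans hx.1)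
        have h1 : w x ≤ w a := hanti (Set.mem_Ici.2 ha'.le) hxI hx.1
        have h2 : w b ≤ w x := hanti hxI (Set.mem_Ici.2 hb'.le) hx.2
        rw [heq2] at h2
        exact le_antisymm h1 h2
      have hzero : ∀ x ∈ Set.Ioo a b, w' x = 0 := by
        intro x hx
        have hx0 : 0 < x := ha'.trans hx.1
        have hDA : HasDerivAt w (w' x) x := (hderiv x hx0.le).hasDerivAt (Ici_mem_nhds hx0)
        have hfe : w =ᶠ[𝓝 x] (fun _ => w a) := by
          filter_upwards [Ioo_mem_nhds hx.1 hx.2] with y hy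
          exact hconst y ⟨hy.1.le, hy.2.le⟩
        have hDA0 : HasDerivAt w 0 x :=
          (hasDerivAt_const x (w a)).congr_of_eventuallyEq hfe
        exact hDA.unique hDA0
      obtain ⟨x₁, hx1a, hx1b⟩ := exists_between hab
      obtain ⟨x₂, hx21, hx2b⟩ := exists_between hx1b
      have hx1m : x₁ ∈ Set.Ioo a b := ⟨hx1a, hx1b⟩
      have hx2m : x₂ ∈ Set.Ioo a b := ⟨hx1a.trans hx21, hx2b⟩
      have hk1 := key x₁ (Set.mem_Ici.2 (le_of_lt (ha'.trans hx1m.1)))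
      have hk2 := key x₂ (Set.mem_Ici.2 (le_of_lt (ha'.trans hx2m.1)))
      rw [hzero x₁ hx1m, hconst x₁ ⟨hx1m.1.le, hx1m.2.le⟩] at hk1
      rw [hzero x₂ hx2m, hconst x₂ ⟨hx2m.1.le, hx2m.2.le⟩] at hk2
      have : h x₁ < h x₂ := hhmono (Set.mem_Ici.2 (ha'.trans hx1m.1).le)
        (Set.mem_Ici.2 (ha'.trans hx2m.1).le) hx21
      linarith
  refine ⟨hstrict, ?_⟩
  -- Step 5 : w → -∞
  obtain ⟨μ₀, hμ₀U, hμ₀min⟩ := hUcpt.exists_isMinOn hUne hc.continuousOn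
  have hub : ∀ L : ℝ, ∃ x, 0 ≤ x ∧ w x ≤ L := by
    intro L
    by_contra hcon
    push_neg at hcon
    have hbd : ∀ x : ℝ, 0 ≤ x → |w x| ≤ max (|L|) (|w₀|) := by
      intro x hx
      have h1 : L < w x := hcon x hx
      have h2 : w x ≤ w₀ := by
        have := hanti Set.self_mem_Ici (Set.mem_Ici.2 hx) hx
        rwa [hw0] at this
      rw [abs_le]
      constructor
      · have : -|L| ≤ L := neg_abs_le L
        have := le_max_left (|L|) (|w₀|)
        linarith
      · have : w₀ ≤ |w₀| := le_abs_self w₀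
        have := le_max_right (|L|) (|w₀|)
        linarith
    obtain ⟨M, hbd'⟩ : ∃ M, ∀ x : ℝ, 0 ≤ x → |w x| ≤ M := ⟨max (|L|) (|w₀|), hbd⟩
    obtain ⟨m, hPlb⟩ : ∃ m, ∀ x : ℝ, 0 ≤ x → m ≤ piU U c (w x) := by
      refine ⟨c μ₀ - K * M, fun x hx => ?_⟩
      have h1 := piU_lb hUne hUcpt hc hK (fun μ hμ => hμ₀min hμ) (w x)
      have h2 : K * |w x| ≤ K * M := mul_le_mul_of_nonneg_left (hbd' x hx) hK0
      linarith
    obtain ⟨X₀, hX₀⟩ := (hhtop.eventually_ge_atTop (γ - m + σ^2/2)).exists_forall_of_atTop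
    obtain ⟨X, hXge, hX0⟩ : ∃ X, X₀ ≤ X ∧ 0 ≤ X := ⟨max X₀ 0, le_max_left _ _, le_max_right _ _⟩
    have hw'le : ∀ x : ℝ, X ≤ x → w' x ≤ -1 := by
      intro x hx
      have hx0 : 0 ≤ x := hX0.trans hx
      have hkx := key x hx0
      have hh3 : γ - m + σ^2/2 ≤ h x := hX₀ x (hXge.trans hx)
      have h5 := hPlb x hx0
      have h4 : σ^2/2 * w' x ≤ σ^2/2 * (-1) := by linarith
      exact (mul_le_mul_iff_right₀ hσ2).1 h4
    -- v = w + id is antitone on [X, ∞)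
    have hvanti : AntitoneOn (fun x => w x + x) (Set.Ici X) := by
      refine antitoneOn_of_deriv_nonpos (convex_Ici X)
        ((hwcont.mono (Set.Ici_subset_Ici.2 hX0)).add (continuous_id.continuousOn)) ?_ ?_
      · rw [interior_Ici]
        intro x hx
        have hx0 : 0 < x := lt_of_le_of_lt hX0 hx
        exact (((hderiv x hx0.le).hasDerivAt (Ici_mem_nhds hx0)).add
          (hasDerivAt_id x)).differentiableAt.differentiableWithinAt
      · rw [interior_Ici]
        intro x hx
        have hx0 : 0 < x := lt_of_le_of_lt hX0 hx
        have hD : HasDerivAt (fun y : ℝ => w y + y) (w' x + 1) x := by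
          exact ((hderiv x hx0.le).hasDerivAt (Ici_mem_nhds hx0)).add (hasDerivAt_id x)
        rw [hD.deriv]
        have := hw'le x hx.le
        linarith
    obtain ⟨x₁, hx1X, hx1L⟩ : ∃ x₁, X ≤ x₁ ∧ w X + X - L ≤ x₁ :=
      ⟨max X (w X + X - L), le_max_left _ _, le_max_right _ _⟩
    have hv := hvanti Set.self_mem_Ici (Set.mem_Ici.2 hx1X) hx1X
    simp only [] at hv
    have : w x₁ ≤ L := by linarith
    exact absurd this (not_le.2 (hcon x₁ (hX0.trans hx1X)))
  rw [tendsto_atTop_atBot]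
  intro b
  obtain ⟨x, hx0, hxb⟩ := hub b
  exact ⟨x, fun a hax => le_trans (hanti (Set.mem_Ici.2 hx0) (Set.mem_Ici.2 (hx0.trans hax)) hax) hxb⟩
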